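/- Let G be a topologically orderable gyrogroup and H a connected L-subgyrogroup of G containing at least two distinct elements. Then H is an open subset of G. -/
import Mathlib


open Set Topology

universe u

class Gyrogroup (G : Type u) where
  op : G → G → G
  one : G
  inv : G → G
  gyr : G → G → G ≃ G
  one_op : ∀ g, op one g = g
  op_one : ∀ g, op g one = g
  inv_op : ∀ g, op (inv g) g = one
  op_inv : ∀ g, op g (inv g) = one
  unique_one : ∀ e : G, (∀ g, op e g = g ∧ op g e = g) → e = one
  unique_inv : ∀ g h : G, (op h g = one ∧ op g h = one) → h = inv g
  gyr_op : ∀ g h f, op g (op h f) = op (op g h) (gyr g h f)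
  gyr_hom : ∀ g h a b, gyr g h (op a b) = op (gyr g h a) (gyr g h b)
  loop : ∀ g h, gyr g h = gyr (op g h) h

namespace Gyrogroup

variable {G : Type u} [Gyrogroup G]

/-- `H` is a subgyrogroup: nonempty and a gyrogroup under the restricted operations. -/
def IsSubgyrogroup (H : Set G) : Prop :=
  H.Nonempty ∧ one ∈ H ∧
  (∀ a ∈ H, ∀ b ∈ H, op a b ∈ H) ∧
  (∀ a ∈ H, inv a ∈ H) ∧
  (∀ a ∈ H, ∀ b ∈ H, Set.BijOn (gyr a b) H H)

/-- `H` is an L-subgyrogroup: `gyr g h` fixes `H` setwise for every `g ∈ G`, `h ∈ H`. -/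
def IsLSubgyrogroup (H : Set G) : Prop :=
  IsSubgyrogroup H ∧ ∀ g : G, ∀ h ∈ H, (gyr g h) '' H = H

def leftCoset (a : G) (H : Set G) : Set G := (fun h => op a h) '' H

/-- The subgyrogroup generated by `S`. -/
def generatedSubgyrogroup (S : Set G) : Set G :=
  ⋂₀ {H : Set G | IsSubgyrogroup H ∧ S ⊆ H}

/-- The gyrogroup operations are continuous (topological gyrogroup). -/
def ContinuousGyroOps (G : Type u) [Gyrogroup G] [TopologicalSpace G] : Prop :=
  Continuous (fun p : G × G => op p.1 p.2) ∧ Continuous (inv : G → G)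

/-- The topology coincides with the order topology of some linear order. -/
def TopologicallyOrderable (G : Type u) [t : TopologicalSpace G] : Prop :=
  ∃ l : LinearOrder G, t = TopologicalSpace.generateFrom
      {s : Set G | ∃ a : G, s = {x | l.lt a x} ∨ s = {x | l.lt x a}}

/-- A strongly topological gyrogroup: a topological gyrogroup with a neighborhood base
at `1` whose members are invariant under all gyroautomorphisms. -/
def StronglyTopologicalGyrogroup (G : Type u) [Gyrogroup G] [TopologicalSpace G] : Prop :=
  ContinuousGyroOps G ∧
  ∃ 𝒰 : Set (Set G), (∀ U ∈ 𝒰, U ∈ nhds (one : G)) ∧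
    (∀ V ∈ nhds (one : G), ∃ U ∈ 𝒰, U ⊆ V) ∧
    (∀ U ∈ 𝒰, ∀ x y : G, (gyr x y) '' U = U)

def StronglyTopologicallyOrderable (G : Type u) [Gyrogroup G] [TopologicalSpace G] : Prop :=
  StronglyTopologicalGyrogroup G ∧ TopologicallyOrderable G

end Gyrogroup


namespace Gyrogroup

variable {G : Type u} [Gyrogroup G]

theorem gyr_one_fix (h f : G) : gyr (one : G) h f = f := by
  have h4 : op h (gyr (one : G) h f) = op h f := by
    have := gyr_op (one : G) h f
    rw [one_op, one_op] at this
    exact this.symm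
  have h1 : ∀ y : G, op (inv h) (op h y) = gyr (inv h) h y := fun y => by
    rw [gyr_op, inv_op, one_op]
  have h5 := congrArg (op (inv h)) h4
  rw [h1, h1] at h5
  exact (gyr (inv h) h).injective h5

theorem aux_cancel_left (a x : G) : op (inv a) (op a x) = x := by
  rw [gyr_op, inv_op, one_op]
  have hl := loop (inv a) a
  rw [inv_op] at hl
  rw [hl, gyr_one_fix]

theorem aux_cancel_right (a x : G) : op a (op (inv a) x) = x := by
  rw [gyr_op, op_inv, one_op]
  have hl := loop a (inv a)
  rw [op_inv] at hl
  rw [hl, gyr_one_fix]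

end Gyrogroup

open Gyrogroup
/-- In a topologically orderable gyrogroup, a connected L-subgyrogroup with at least
two elements is open. -/
theorem stmt5 {G : Type u} [Gyrogroup G] [TopologicalSpace G]
    (hc : ContinuousGyroOps G) (ho : TopologicallyOrderable G)
    (H : Set G) (hH : IsLSubgyrogroup H) (hconn : IsPreconnected H)
    (htwo : ∃ a ∈ H, ∃ b ∈ H, a ≠ b) :
    IsOpen H := by
  obtain ⟨l, hl⟩ := ho
  letI : LinearOrder G := l
  haveI hOT : OrderTopology G := ⟨hl⟩
  obtain ⟨⟨_, honeH, hopH, hinvH, _⟩, _⟩ := hH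
  have contL : ∀ g : G, Continuous (fun x : G => op g x) :=
    fun g => hc.1.comp (continuous_const.prodMk continuous_id)
  obtain ⟨a₀, ha₀, b₀, hb₀, hne⟩ := htwo
  obtain ⟨a, b, ha, hb, hab⟩ : ∃ a b : G, a ∈ H ∧ b ∈ H ∧ a < b := by
    rcases lt_or_gt_of_ne hne with h | h
    · exact ⟨a₀, b₀, ha₀, hb₀, h⟩
    · exact ⟨b₀, a₀, hb₀, ha₀, h⟩
  obtain ⟨c, hcH, hca, hcb⟩ : ∃ c ∈ H, a < c ∧ c < b := by
    have hcov : H ⊆ Iio b ∪ Ioi a := fun x _ => by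
      rcases lt_or_ge x b with h | h
      · exact Or.inl h
      · exact Or.inr (lt_of_lt_of_le hab h)
    obtain ⟨z, hzH, hz1, hz2⟩ :=
      hconn (Iio b) (Ioi a) isOpen_Iio isOpen_Ioi hcov ⟨a, ha, hab⟩ ⟨b, hb, hab⟩
    exact ⟨z, hzH, hz2, hz1⟩
  have hIoo : Ioo a b ⊆ H := by
    intro x hx
    by_contra hxH
    have hcov2 : H ⊆ Iio x ∪ Ioi x := by
      intro y hy
      rcases lt_trichotomy y x with h | h | h
      · exact Or.inl h
      · exact absurd (h ▸ hy) hxH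
      · exact Or.inr h
    obtain ⟨z, _, hz1, hz2⟩ :=
      hconn (Iio x) (Ioi x) isOpen_Iio isOpen_Ioi hcov2 ⟨a, ha, hx.1⟩ ⟨b, hb, hx.2⟩
    exact absurd (hz1.trans hz2) (lt_irrefl _)
  rw [isOpen_iff_forall_mem_open]
  intro h hhH
  refine ⟨(fun x => op c (op (inv h) x)) ⁻¹' (Ioo a b), ?_, ?_, ?_⟩
  · intro x hx
    have hyH : op c (op (inv h) x) ∈ H := hIoo hx
    have hx' : x = op h (op (inv c) (op c (op (inv h) x))) := by
      rw [aux_cancel_left, aux_cancel_right]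
    rw [hx']
    exact hopH _ hhH _ (hopH _ (hinvH _ hcH) _ hyH)
  · exact isOpen_Ioo.preimage ((contL c).comp (contL (inv h)))
  · show op c (op (inv h) h) ∈ Ioo a b
    rw [inv_op, op_one]
    exact ⟨hca, hcb⟩
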